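/- With Pecker's polynomials P_m as defined recursively, for all nonnegative reals y₁,...,y_m and any real root t of the univariate polynomial P_m(y₁,...,y_m, ·), the sharper bounds (1 − √((m−1)/m))·Σy_i ≤ t ≤ (1 + √((m−1)/m))·Σy_i hold. -/
import Mathlib

noncomputable def pecker : (m : ℕ) → (Fin (m + 1) → ℝ) → ℝ → ℝ
  | 0, y, t => t - y 0
  | m + 1, y, t =>
      pecker m
        (fun k : Fin (m + 1) =>
          y k.succ * ∑ i : Fin (k.1 + 1), y ⟨i.1, by have := i.isLt; have := k.isLt; omega⟩)
        ((t - ∑ i, y i) ^ 2)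


noncomputable def peckerA : (m : ℕ) → (Fin (m + 1) → ℝ) → ℝ
  | 0, y => y 0
  | m + 1, y =>
      peckerA m
        (fun k : Fin (m + 1) =>
          y k.succ * ∑ i : Fin (k.1 + 1), y ⟨i.1, by have := i.isLt; have := k.isLt; omega⟩)

lemma sq_sum_aux (x : ℕ → ℝ) (n : ℕ) :
    (∑ i ∈ Finset.range n, x i) ^ 2 =
      (∑ i ∈ Finset.range n, x i ^ 2) +
        2 * ∑ k ∈ Finset.range n, x k * ∑ i ∈ Finset.range k, x i := by
  induction n with
  | zero => simp
  | succ n ih =>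
    rw [Finset.sum_range_succ, Finset.sum_range_succ (fun i => x i ^ 2),
      Finset.sum_range_succ (fun k => x k * ∑ i ∈ Finset.range k, x i)]
    ring_nf
    ring_nf at ih
    linarith [ih]

lemma pecker_key : ∀ (m : ℕ) (y : Fin (m+1) → ℝ), (∀ i, 0 ≤ y i) → ∀ t, pecker m y t = 0 →
    (t - ∑ i, y i) ^ 2 ≤ ((m : ℝ) / (m + 1)) * (∑ i, y i) ^ 2 := by
  intro m
  induction m with
  | zero =>
    intro y hy t ht
    simp only [pecker, sub_eq_zero] at ht
    simp [ht, Fin.sum_univ_one]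
  | succ m ih =>
    intro y hy t ht
    set a : Fin (m+1) → ℝ := fun k : Fin (m + 1) =>
          y k.succ * ∑ i : Fin (k.1 + 1), y ⟨i.1, by have := i.isLt; have := k.isLt; omega⟩ with ha
    have ha0 : ∀ k, 0 ≤ a k := by
      intro k
      exact mul_nonneg (hy _) (Finset.sum_nonneg fun i _ => hy _)
    have ht' : pecker m a ((t - ∑ i, y i) ^ 2) = 0 := ht
    have hIH := ih a ha0 _ ht'
    set S : ℝ := ∑ i, y i with hS
    set A : ℝ := ∑ k, a k with hA
    have hAnn : 0 ≤ A := Finset.sum_nonneg fun k _ => ha0 k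
    -- sum identity via ℕ-indexed function
    set x : ℕ → ℝ := fun n => if h : n < m + 2 then y ⟨n, h⟩ else 0 with hx
    have hxnn : ∀ n, 0 ≤ x n := by
      intro n; by_cases h : n < m + 2 <;> simp [hx, h, hy]
    have hSx : S = ∑ i ∈ Finset.range (m+2), x i := by
      rw [hS, ← Fin.sum_univ_eq_sum_range]
      apply Finset.sum_congr rfl
      intro i _
      simp [hx, i.isLt]
    have hAx : A = ∑ k ∈ Finset.range (m+1), x (k+1) * ∑ i ∈ Finset.range (k+1), x i := by
      rw [hA, ← Fin.sum_univ_eq_sum_range (fun k => x (k+1) * ∑ i ∈ Finset.range (k+1), x i)]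
      apply Finset.sum_congr rfl
      intro k _
      have h1 : a k = y k.succ * ∑ i : Fin (k.1 + 1), y ⟨i.1, by have := i.isLt; have := k.isLt; omega⟩ := rfl
      rw [h1]
      have h2 : x (k.1 + 1) = y k.succ := by
        have : (k.1 : ℕ) + 1 < m + 2 := by have := k.isLt; omega
        simp [hx, this]; rfl
      rw [h2]
      congr 1
      rw [← Fin.sum_univ_eq_sum_range]
      apply Finset.sum_congr rfl
      intro i _
      have hi : (i.1 : ℕ) < m + 2 := by have := i.isLt; have := k.isLt; omega
      simp [hx, hi]
    have hshift : ∑ k ∈ Finset.range (m+2), x k * ∑ i ∈ Finset.range k, x i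
        = ∑ k ∈ Finset.range (m+1), x (k+1) * ∑ i ∈ Finset.range (k+1), x i := by
      rw [Finset.sum_range_succ' (fun k => x k * ∑ i ∈ Finset.range k, x i)]
      simp
    have hid : S ^ 2 = (∑ i ∈ Finset.range (m+2), x i ^ 2) + 2 * A := by
      rw [hSx, hAx, ← hshift, sq_sum_aux]
    have hcs : (∑ i ∈ Finset.range (m+2), x i) ^ 2
        ≤ (m + 2 : ℝ) * ∑ i ∈ Finset.range (m+2), x i ^ 2 := by
      have := sq_sum_le_card_mul_sum_sq (s := Finset.range (m+2)) (f := x)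
      simpa using this
    have h2A : 2 * A ≤ ((m + 1 : ℝ) / (m + 2)) * S ^ 2 := by
      rw [← hSx] at hcs
      have hm2 : (0:ℝ) < (m:ℝ) + 2 := by positivity
      rw [div_mul_eq_mul_div, le_div_iff₀ hm2]
      nlinarith [hid, hcs]
    -- from IH: (t-S)^2 ≤ 2A
    have hc1 : ((m : ℝ) / (m + 1)) ≤ 1 := by
      rw [div_le_one (by positivity)]; linarith
    set u : ℝ := (t - S) ^ 2 with hu
    have hunn : 0 ≤ u := sq_nonneg _
    have h1 : (u - A) ^ 2 ≤ A ^ 2 := by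
      calc (u - A)^2 ≤ ((m:ℝ)/(m+1)) * A ^ 2 := hIH
        _ ≤ A ^ 2 := by nlinarith [sq_nonneg A]
    have hu2A : u ≤ 2 * A := by nlinarith
    have hcast : ((m + 1 : ℕ) : ℝ) = (m : ℝ) + 1 := by push_cast; ring
    calc u ≤ 2 * A := hu2A
      _ ≤ ((m + 1 : ℝ) / (m + 2)) * S ^ 2 := h2A
      _ = (((m+1 : ℕ) : ℝ) / ((m+1 : ℕ) + 1)) * S ^ 2 := by push_cast; ring_nf

theorem stmt14 (m : ℕ) (y : Fin (m + 1) → ℝ) (hy : ∀ i, 0 ≤ y i) (t : ℝ)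
    (ht : pecker m y t = 0) :
    (1 - Real.sqrt ((m : ℝ) / (m + 1))) * ∑ i, y i ≤ t ∧
      t ≤ (1 + Real.sqrt ((m : ℝ) / (m + 1))) * ∑ i, y i := by
  have key := pecker_key m y hy t ht
  set S : ℝ := ∑ i, y i with hS
  have hSnn : 0 ≤ S := Finset.sum_nonneg fun i _ => hy i
  have habs : |t - S| ≤ Real.sqrt ((m : ℝ) / (m + 1)) * S := by
    have h1 : Real.sqrt ((t - S)^2) ≤ Real.sqrt (((m : ℝ) / (m + 1)) * S ^ 2) :=
      Real.sqrt_le_sqrt key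
    rw [Real.sqrt_sq_eq_abs] at h1
    rwa [Real.sqrt_mul (by positivity), Real.sqrt_sq hSnn] at h1
  rw [abs_le] at habs
  constructor <;> nlinarith [habs.1, habs.2]
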